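/- For any irrational α there are infinitely many relabeling times; i.e., infinitely many N for which the points {0α},...,{(N-1)α} determine exactly two distinct cyclic gap lengths. -/

import Mathlib

/-- The cyclic gap after the point `{m α}` among the points `{0α}, …, {(N-1)α}` on ℝ/ℤ:
the infimum of positive circular distances from `{m α}` to the other points. -/
noncomputable def gapAt (α : ℝ) (N : ℕ) (m : ℕ) : ℝ :=
  sInf {d : ℝ | 0 < d ∧ ∃ m' : ℕ, m' < N ∧ Int.fract ((m' : ℝ) * α - (m : ℝ) * α) = d}

open Classical in
/-- The set of distinct cyclic gap lengths of the configuration `{0α}, …, {(N-1)α}`. -/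
noncomputable def gapSet (α : ℝ) (N : ℕ) : Finset ℝ :=
  (Finset.range N).image (gapAt α N)

/-- The multiset of cyclic gaps of the configuration `{0α}, …, {(N-1)α}`. -/
noncomputable def gapMult (α : ℝ) (N : ℕ) : Multiset ℝ :=
  (Multiset.range N).map (gapAt α N)

/-- Cyclic extension of the ordering permutation `u` to integer indices, mod `N`. -/
def uc (N : ℕ) (u : ℕ → ℕ) (j : ℤ) : ℕ := u ((j % (N : ℤ)).toNat)

namespace ThreeGapAux

/-- `F α n = {n α}` for natural `n`. -/
noncomputable def F (α : ℝ) (n : ℕ) : ℝ := Int.fract ((n : ℝ) * α)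

variable {α : ℝ}

lemma F_nonneg (α : ℝ) (n : ℕ) : 0 ≤ F α n := Int.fract_nonneg _

lemma F_lt_one (α : ℝ) (n : ℕ) : F α n < 1 := Int.fract_lt_one _

lemma F_pos (hα : Irrational α) {n : ℕ} (hn : n ≠ 0) : 0 < F α n := by
  rcases (F_nonneg α n).lt_or_eq with h | h
  · exact h
  · exfalso
    have hirr : Irrational ((n : ℝ) * α) := hα.natCast_mul hn
    have : (n : ℝ) * α = (⌊(n : ℝ) * α⌋ : ℝ) := by
      have := h.symm
      simp only [F, Int.fract] at this
      linarith
    exact hirr.ne_int _ this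

lemma F_ne (hα : Irrational α) {m n : ℕ} (h : m ≠ n) : F α m ≠ F α n := by
  intro heq
  rw [F, F, Int.fract_eq_fract] at heq
  obtain ⟨z, hz⟩ := heq
  have hmn : ((m : ℤ) - (n : ℤ)) ≠ 0 := by
    simp only [sub_ne_zero]
    exact_mod_cast h
  have hirr : Irrational ((((m : ℤ) - (n : ℤ)) : ℝ) * α) := by
    have := hα.intCast_mul hmn
    convert this using 2
    push_cast
    ring
  apply hirr.ne_int z
  push_cast
  push_cast at hz
  linarith

lemma F_add_cases (α : ℝ) (m n : ℕ) :
    F α (m + n) = F α m + F α n ∨ F α (m + n) = F α m + F α n - 1 := by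
  obtain ⟨z, hz⟩ := Int.fract_add ((m : ℝ) * α) ((n : ℝ) * α)
  have hmn : F α (m + n) = Int.fract ((m : ℝ) * α + (n : ℝ) * α) := by
    rw [F]; congr 1; push_cast; ring
  have h0 : Int.fract ((m:ℝ)*α + (n:ℝ)*α) - F α m - F α n = (z : ℝ) := hz
  have h1 : (z : ℝ) < 1 := by
    have := Int.fract_lt_one ((m:ℝ)*α + (n:ℝ)*α)
    have := F_nonneg α m; have := F_nonneg α n
    linarith
  have h2 : (-2 : ℝ) < z := by
    have := Int.fract_nonneg ((m:ℝ)*α + (n:ℝ)*α)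
    have := F_lt_one α m; have := F_lt_one α n
    linarith
  have hz1 : z < 1 := by exact_mod_cast h1
  have hz2 : (-2 : ℤ) < z := by exact_mod_cast h2
  interval_cases z
  · right; rw [hmn]; push_cast at h0; linarith
  · left; rw [hmn]; push_cast at h0; linarith

lemma F_add_of_lt {m n : ℕ} (h : F α m + F α n < 1) : F α (m + n) = F α m + F α n := by
  rcases F_add_cases α m n with h' | h'
  · exact h'
  · exfalso; have := F_nonneg α (m + n); linarith

lemma F_add_of_ge {m n : ℕ} (h : 1 ≤ F α m + F α n) : F α (m + n) = F α m + F α n - 1 := by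
  rcases F_add_cases α m n with h' | h'
  · exfalso; have := F_lt_one α (m + n); linarith
  · exact h'


lemma exists_pair (hα : Irrational α) (N : ℕ) (hN : 3 ≤ N) :
    ∃ a b : ℕ, 1 ≤ a ∧ 1 ≤ b ∧ N ≤ a + b ∧
      ∀ n, 1 ≤ n → n < a + b → F α a ≤ F α n ∧ F α n ≤ F α b := by
  have hne : (Finset.Icc 1 (N - 1)).Nonempty := ⟨1, by simp; omega⟩
  obtain ⟨a, haI, hamin⟩ := Finset.exists_min_image (Finset.Icc 1 (N - 1)) (F α) hne
  obtain ⟨b, hbI, hbmax⟩ := Finset.exists_max_image (Finset.Icc 1 (N - 1)) (F α) hne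
  rw [Finset.mem_Icc] at haI hbI
  have h1I : (1 : ℕ) ∈ Finset.Icc 1 (N - 1) := by rw [Finset.mem_Icc]; omega
  have h2I : (2 : ℕ) ∈ Finset.Icc 1 (N - 1) := by rw [Finset.mem_Icc]; omega
  -- F α a < F α b
  have hδΔ : F α a < F α b := by
    have ha1 := hamin 1 h1I
    have ha2 := hamin 2 h2I
    have hb1 := hbmax 1 h1I
    have hb2 := hbmax 2 h2I
    rcases lt_or_gt_of_ne (F_ne hα (show (1:ℕ) ≠ 2 by norm_num)) with h | h
    · linarith
    · linarith
  have ha0 : 0 < F α a := F_pos hα (by omega)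
  have hb1 : F α b < 1 := F_lt_one α b
  -- N ≤ a + b
  have hab : N ≤ a + b := by
    by_contra h
    push_neg at h
    have hmemab : a + b ∈ Finset.Icc 1 (N - 1) := by rw [Finset.mem_Icc]; omega
    rcases le_or_gt 1 (F α a + F α b) with hs | hs
    · have h1 := F_add_of_ge hs
      have h2 := hamin _ hmemab
      linarith
    · have h1 := F_add_of_lt hs
      have h2 := hbmax _ hmemab
      linarith
  refine ⟨a, b, haI.1, hbI.1, hab, ?_⟩
  intro n hn1 hn2
  rcases lt_or_ge n N with hn | hn
  · exact ⟨hamin n (by rw [Finset.mem_Icc]; omega), hbmax n (by rw [Finset.mem_Icc]; omega)⟩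
  -- now N ≤ n < a + b
  have hnaI : n - a ∈ Finset.Icc 1 (N - 1) := by rw [Finset.mem_Icc]; omega
  have hnbI : n - b ∈ Finset.Icc 1 (N - 1) := by rw [Finset.mem_Icc]; omega
  have hxa := hamin _ hnbI
  have hxb := hbmax _ hnbI
  have hya := hamin _ hnaI
  have hyb := hbmax _ hnaI
  have hdecx : F α n = F α (n - b) + F α b ∨ F α n = F α (n - b) + F α b - 1 := by
    have he : (n - b) + b = n := by omega
    rcases F_add_cases α (n - b) b with h | h
    · left; rw [he] at h; exact h
    · right; rw [he] at h; exact h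
  have hdecy : F α n = F α (n - a) + F α a ∨ F α n = F α (n - a) + F α a - 1 := by
    have he : (n - a) + a = n := by omega
    rcases F_add_cases α (n - a) a with h | h
    · left; rw [he] at h; exact h
    · right; rw [he] at h; exact h
  have hneq : n - b ≠ a := by omega
  have hFne := F_ne hα hneq
  constructor
  · by_contra h
    push_neg at h  -- F α n < F α a
    have hx : F α n = F α (n - b) + F α b - 1 := by
      rcases hdecx with h' | h'
      · exfalso; linarith
      · exact h'
    have hy : F α n = F α (n - a) + F α a - 1 := by
      rcases hdecy with h' | h'
      · exfalso; linarith
      · exact h'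
    -- F (n-b) = F a forced
    have : F α (n - b) = F α a := by linarith
    exact hFne this
  · by_contra h
    push_neg at h  -- F α b < F α n
    have hx : F α n = F α (n - b) + F α b := by
      rcases hdecx with h' | h'
      · exact h'
      · exfalso
        have := F_lt_one α (n - b)
        linarith
    have hy : F α n = F α (n - a) + F α a := by
      rcases hdecy with h' | h'
      · exact h'
      · exfalso
        have := F_lt_one α a
        linarith
    have : F α (n - b) = F α a := by linarith
    exact hFne this


lemma fract_diff_gt {m m' : ℕ} (h : m < m') :
    Int.fract ((m' : ℝ) * α - (m : ℝ) * α) = F α (m' - m) := by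
  rw [F]
  congr 1
  rw [Nat.cast_sub h.le]
  ring

lemma fract_diff_lt (hα : Irrational α) {m m' : ℕ} (h : m' < m) :
    Int.fract ((m' : ℝ) * α - (m : ℝ) * α) = 1 - F α (m - m') := by
  have he : (m' : ℝ) * α - (m : ℝ) * α = -(((m - m' : ℕ) : ℝ) * α) := by
    rw [Nat.cast_sub h.le]
    ring
  rw [he, Int.fract_neg]
  · rfl
  · exact (F_pos hα (by omega)).ne'

lemma gapAt_of_lt (hα : Irrational α) {a b m : ℕ} (ha : 1 ≤ a) (hb : 1 ≤ b)
    (hmin : ∀ n, 1 ≤ n → n < a + b → F α a ≤ F α n ∧ F α n ≤ F α b)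
    (hm : m < b) : gapAt α (a + b) m = F α a := by
  have hδpos : 0 < F α a := F_pos hα (by omega)
  have hlb : ∀ d ∈ {d : ℝ | 0 < d ∧ ∃ m' : ℕ, m' < a + b ∧
      Int.fract ((m' : ℝ) * α - (m : ℝ) * α) = d}, F α a ≤ d := by
    rintro d ⟨hd, m', hm', rfl⟩
    rcases lt_trichotomy m m' with h | h | h
    · rw [fract_diff_gt h]
      exact (hmin _ (by omega) (by omega)).1
    · exfalso
      subst h
      simp at hd
    · rw [fract_diff_lt hα h]
      rw [fract_diff_lt hα h] at hd
      set k := m - m' with hk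
      by_contra hc
      push_neg at hc  -- 1 - F α k < F α a
      have hge := (hmin (k + a) (by omega) (by omega)).1
      have hlt1 := F_lt_one α k
      rcases F_add_cases α k a with h' | h'
      · have := F_lt_one α (k + a); linarith
      · linarith
  have hmem : F α a ∈ {d : ℝ | 0 < d ∧ ∃ m' : ℕ, m' < a + b ∧
      Int.fract ((m' : ℝ) * α - (m : ℝ) * α) = d} := by
    refine ⟨hδpos, m + a, by omega, ?_⟩
    rw [fract_diff_gt (by omega : m < m + a)]
    congr 1
    omega
  exact le_antisymm (csInf_le ⟨F α a, hlb⟩ hmem) (le_csInf ⟨F α a, hmem⟩ hlb)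

lemma gapAt_of_ge (hα : Irrational α) {a b m : ℕ} (ha : 1 ≤ a) (hb : 1 ≤ b)
    (hmin : ∀ n, 1 ≤ n → n < a + b → F α a ≤ F α n ∧ F α n ≤ F α b)
    (hm : b ≤ m) (hm2 : m < a + b) : gapAt α (a + b) m = 1 - F α b := by
  have hεpos : 0 < 1 - F α b := by have := F_lt_one α b; linarith
  have hlb : ∀ d ∈ {d : ℝ | 0 < d ∧ ∃ m' : ℕ, m' < a + b ∧
      Int.fract ((m' : ℝ) * α - (m : ℝ) * α) = d}, 1 - F α b ≤ d := by
    rintro d ⟨hd, m', hm', rfl⟩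
    rcases lt_trichotomy m m' with h | h | h
    · rw [fract_diff_gt h]
      set k := m' - m with hk
      by_contra hc
      push_neg at hc  -- F α k < 1 - F α b
      have hle := (hmin (k + b) (by omega) (by omega)).2
      have hkpos := F_pos hα (show k ≠ 0 by omega)
      rcases F_add_cases α k b with h' | h'
      · linarith
      · have := F_nonneg α (k + b); linarith
    · exfalso
      subst h
      simp at hd
    · rw [fract_diff_lt hα h]
      have := (hmin (m - m') (by omega) (by omega)).2
      linarith
  have hmem : 1 - F α b ∈ {d : ℝ | 0 < d ∧ ∃ m' : ℕ, m' < a + b ∧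
      Int.fract ((m' : ℝ) * α - (m : ℝ) * α) = d} := by
    refine ⟨hεpos, m - b, by omega, ?_⟩
    rw [fract_diff_lt hα (by omega : m - b < m)]
    congr 2
    omega
  exact le_antisymm (csInf_le ⟨1 - F α b, hlb⟩ hmem) (le_csInf ⟨1 - F α b, hmem⟩ hlb)

lemma gapSet_card (hα : Irrational α) {a b : ℕ} (ha : 1 ≤ a) (hb : 1 ≤ b)
    (hmin : ∀ n, 1 ≤ n → n < a + b → F α a ≤ F α n ∧ F α n ≤ F α b) :
    (gapSet α (a + b)).card = 2 := by
  have hne : F α a ≠ 1 - F α b := by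
    intro h
    have h1 : 1 ≤ F α a + F α b := by linarith
    have h2 := F_add_of_ge h1
    have h3 : F α (a + b) = 0 := by linarith
    have := F_pos hα (show a + b ≠ 0 by omega)
    linarith
  have himg : gapSet α (a + b) = {F α a, 1 - F α b} := by
    apply Finset.Subset.antisymm
    · intro d hd
      rw [gapSet, Finset.mem_image] at hd
      obtain ⟨m, hm, rfl⟩ := hd
      rw [Finset.mem_range] at hm
      rcases lt_or_ge m b with h | h
      · rw [gapAt_of_lt hα ha hb hmin h]
        simp
      · rw [gapAt_of_ge hα ha hb hmin h hm]
        simp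
    · intro d hd
      simp only [Finset.mem_insert, Finset.mem_singleton] at hd
      rw [gapSet, Finset.mem_image]
      rcases hd with rfl | rfl
      · exact ⟨0, Finset.mem_range.2 (by omega), gapAt_of_lt hα ha hb hmin hb⟩
      · exact ⟨b, Finset.mem_range.2 (by omega), gapAt_of_ge hα ha hb hmin le_rfl (by omega)⟩
  rw [himg, Finset.card_insert_of_notMem (by simp [hne]), Finset.card_singleton]


end ThreeGapAux

theorem infinitely_many_relabeling_times (α : ℝ) (hα : Irrational α) :
    {N : ℕ | (gapSet α N).card = 2}.Infinite := by
  apply Set.infinite_of_not_bddAbove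
  rintro ⟨C, hC⟩
  obtain ⟨a, b, ha, hb, hab, hmin⟩ :=
    ThreeGapAux.exists_pair hα (max (C + 1) 3) (le_max_right _ _)
  have hmem : a + b ∈ {N : ℕ | (gapSet α N).card = 2} :=
    ThreeGapAux.gapSet_card hα ha hb hmin
  have hle : a + b ≤ C := hC hmem
  have := le_max_left (C + 1) 3
  omega
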